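/- Types furnish finite counterexamples for fixpoints: let D be a term, z a variable, and fix x.M a closed fixpoint term with D[fix x.M/z] closed. Then (i) for every type A, if D[fix x.M/z] ∉ T̄⟦A⟧ then there exists n₀ ∈ ℕ such that for all n ≥ n₀, D[fixⁿ x.M/z] ∉ T̄⟦A⟧; and (ii) for every finitely verifiable type F, if D[fix x.M/z] ∈ T⟦F⟧ then there exists n₀ ∈ ℕ such that for all n ≥ n₀, D[fixⁿ x.M/z] ∈ T⟦F⟧. -/

import Mathlib

namespace PCF

/-- Terms of the simple CBV, PCF-like language.  Variables are natural numbers. -/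
inductive Tm : Type
  | var : ℕ → Tm
  | zero : Tm
  | succ : Tm → Tm
  | pred : Tm → Tm
  | ifz : Tm → Tm → Tm → Tm
  | abs : ℕ → Tm → Tm
  | app : Tm → Tm → Tm
  | fix : ℕ → Tm → Tm
  | pair : Tm → Tm → Tm
  | lett : ℕ → ℕ → Tm → Tm → Tm
  deriving DecidableEq

/-- The numeral `succ^n(zero)`. -/
def numeral : ℕ → Tm
  | 0 => .zero
  | n + 1 => .succ (numeral n)

/-- Values. -/
inductive IsValue : Tm → Prop
  | var (x : ℕ) : IsValue (.var x)
  | num (n : ℕ) : IsValue (numeral n)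
  | pair {V W : Tm} : IsValue V → IsValue W → IsValue (.pair V W)
  | abs (x : ℕ) (M : Tm) : IsValue (.abs x M)

/-- Capture-permitting substitution `M[N/x]` (adequate since we only ever
substitute closed terms). -/
def subst (x : ℕ) (N : Tm) : Tm → Tm
  | .var y => if y = x then N else .var y
  | .zero => .zero
  | .succ M => .succ (subst x N M)
  | .pred M => .pred (subst x N M)
  | .ifz M P Q => .ifz (subst x N M) (subst x N P) (subst x N Q)
  | .abs y M => if y = x then .abs y M else .abs y (subst x N M)
  | .app M P => .app (subst x N M) (subst x N P)
  | .fix y M => if y = x then .fix y M else .fix y (subst x N M)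
  | .pair M P => .pair (subst x N M) (subst x N P)
  | .lett y z M P =>
      .lett y z (subst x N M) (if y = x ∨ z = x then P else subst x N P)

/-- Free variables. -/
def fv : Tm → Finset ℕ
  | .var y => {y}
  | .zero => ∅
  | .succ M => fv M
  | .pred M => fv M
  | .ifz M P Q => fv M ∪ fv P ∪ fv Q
  | .abs y M => fv M \ {y}
  | .app M P => fv M ∪ fv P
  | .fix y M => fv M \ {y}
  | .pair M P => fv M ∪ fv P
  | .lett y z M P => fv M ∪ (fv P \ {y, z})

def ClosedTm (M : Tm) : Prop := fv M = ∅

/-- One-step call-by-value reduction (closure of the redex rules under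
evaluation contexts). -/
inductive Step : Tm → Tm → Prop
  | ifz_zero {N P : Tm} : Step (.ifz (numeral 0) N P) N
  | ifz_succ {n : ℕ} {N P : Tm} : Step (.ifz (numeral (n + 1)) N P) P
  | lett_beta {x y : ℕ} {V W M : Tm} : IsValue V → IsValue W →
      Step (.lett x y (.pair V W) M) (subst y W (subst x V M))
  | fix_step {x : ℕ} {M : Tm} : Step (.fix x M) (subst x (.fix x M) M)
  | pred_zero : Step (.pred (numeral 0)) (numeral 0)
  | pred_succ {n : ℕ} : Step (.pred (numeral (n + 1))) (numeral n)
  | beta {x : ℕ} {M V : Tm} : IsValue V → Step (.app (.abs x M) V) (subst x V M)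
  | succ_ctx {M M' : Tm} : Step M M' → Step (.succ M) (.succ M')
  | pred_ctx {M M' : Tm} : Step M M' → Step (.pred M) (.pred M')
  | pair_left {M M' N : Tm} : Step M M' → Step (.pair M N) (.pair M' N)
  | pair_right {V N N' : Tm} : IsValue V → Step N N' → Step (.pair V N) (.pair V N')
  | lett_ctx {x y : ℕ} {M M' N : Tm} : Step M M' → Step (.lett x y M N) (.lett x y M' N)
  | ifz_ctx {M M' N P : Tm} : Step M M' → Step (.ifz M N P) (.ifz M' N P)
  | app_right {x : ℕ} {M N N' : Tm} : Step N N' →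
      Step (.app (.abs x M) N) (.app (.abs x M) N')
  | app_left {M M' N : Tm} : Step M M' → Step (.app M N) (.app M' N)

/-- Many-step reduction. -/
def Steps : Tm → Tm → Prop := Relation.ReflTransGen Step

def NormalForm (M : Tm) : Prop := ¬ ∃ N, Step M N

def Evaluates (M : Tm) : Prop := ∃ V, Steps M V ∧ IsValue V

/-- `M` diverges: it has no normal form. -/
def Diverges (M : Tm) : Prop := ¬ ∃ N, Steps M N ∧ NormalForm N

def Stuck (M : Tm) : Prop := NormalForm M ∧ ¬ IsValue M

def GoesWrong (M : Tm) : Prop := ∃ P, Steps M P ∧ Stuck P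

/-- `div` = `fix x. x`. -/
def divTm : Tm := .fix 0 (.var 0)

/-- `P ≲ N`: if `P` reduces to a normal form then `N` reduces to the same
normal form. -/
def RefBelow (P N : Tm) : Prop := ∀ R, Steps P R → NormalForm R → Steps N R

/-- Fixpoint approximants. -/
def fixApprox (x : ℕ) (M : Tm) : ℕ → Tm
  | 0 => divTm
  | n + 1 => subst x (fixApprox x M n) M

/-- Finitely verifiable types. -/
inductive FTy : Type
  | nat : FTy
  | prod : FTy → FTy → FTy
  deriving DecidableEq

/-- Types: `Nat | A×B | A→B | A⇝F | Ok` (necessity arrows only to finitely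
verifiable types). -/
inductive Ty : Type
  | nat : Ty
  | prod : Ty → Ty → Ty
  | arrow : Ty → Ty → Ty
  | narrow : Ty → FTy → Ty
  | ok : Ty
  deriving DecidableEq

/-- Inclusion of finitely verifiable types into types. -/
def FTy.toTy : FTy → Ty
  | .nat => .nat
  | .prod A B => .prod A.toTy B.toTy

/-- `T⟦·⟧` applied to a set of values: the terms that evaluate into it. -/
def TSem (Sv : Tm → Prop) (M : Tm) : Prop :=
  ClosedTm M ∧ ∃ V, Steps M V ∧ IsValue V ∧ Sv V

/-- `T̄⟦·⟧`: evaluate into the set, or diverge. -/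
def TBarSem (Sv : Tm → Prop) (M : Tm) : Prop :=
  TSem Sv M ∨ (ClosedTm M ∧ Diverges M)

/-- Semantics of finitely verifiable types. -/
def FSem : FTy → Tm → Prop
  | .nat => fun M => ∃ n, M = numeral n
  | .prod A B => fun M => ∃ V W, M = .pair V W ∧ FSem A V ∧ FSem B W

/-- Semantics of types, as sets of closed values. -/
def Sem : Ty → Tm → Prop
  | .nat => fun M => ∃ n, M = numeral n
  | .prod A B => fun M => ∃ V W, M = .pair V W ∧ Sem A V ∧ Sem B W
  | .arrow A B => fun M => ∃ x P, M = .abs x P ∧ ClosedTm M ∧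
      ∀ V, ClosedTm V → IsValue V → Sem A V → TBarSem (Sem B) (subst x V P)
  | .narrow A F => fun M => ∃ x P, M = .abs x P ∧ ClosedTm M ∧
      ∀ V, ClosedTm V → IsValue V → TSem (FSem F) (subst x V P) → Sem A V
  | .ok => fun M => ClosedTm M ∧ IsValue M

/-- Typing formulas `M : A`. -/
structure Formula where
  tm : Tm
  ty : Ty
  deriving DecidableEq

/-- Make a formula. -/
def fm (M : Tm) (A : Ty) : Formula := ⟨M, A⟩

/-- `x` does not occur free in any formula of `Γ`. -/
def FreshFor (x : ℕ) (Γ : Finset Formula) : Prop := ∀ φ ∈ Γ, x ∉ fv φ.tm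

def IsArrowTy (A : Ty) : Prop :=
  (∃ B C, A = .arrow B C) ∨ (∃ B F, A = .narrow B F)

def IsProdTy (A : Ty) : Prop := ∃ B C, A = .prod B C

/-- Disjointness of types: one is `Nat` and the other is not, or one is an
arrow and the other is not, or one is a product and the other is not. -/
def Disj (A B : Ty) : Prop :=
  (A = .nat ∧ B ≠ .nat) ∨ (B = .nat ∧ A ≠ .nat) ∨
  (IsArrowTy A ∧ ¬ IsArrowTy B) ∨ (IsArrowTy B ∧ ¬ IsArrowTy A) ∨
  (IsProdTy A ∧ ¬ IsProdTy B) ∨ (IsProdTy B ∧ ¬ IsProdTy A)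

/-- The two-sided type system (including the `Ok` rules). -/
inductive Der : Finset Formula → Finset Formula → Prop
  | id (Γ Δ : Finset Formula) (x : ℕ) (A : Ty) :
      Der (insert (fm (.var x) A) Γ) (insert (fm (.var x) A) Δ)
  | dis {Γ Δ : Finset Formula} {M : Tm} {A B : Ty} :
      Disj A B → Der Γ (insert (fm M B) Δ) → Der (insert (fm M A) Γ) Δ
  | zeroR (Γ Δ : Finset Formula) : Der Γ (insert (fm .zero .nat) Δ)
  | succR {Γ Δ M} : Der Γ (insert (fm M .nat) Δ) → Der Γ (insert (fm (.succ M) .nat) Δ)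
  | predR {Γ Δ M} : Der Γ (insert (fm M .nat) Δ) → Der Γ (insert (fm (.pred M) .nat) Δ)
  | letR {Γ Δ : Finset Formula} {x y : ℕ} {M N : Tm} {A B C : Ty} :
      Der Γ (insert (fm M (.prod B C)) Δ) →
      Der (insert (fm (.var x) B) (insert (fm (.var y) C) Γ)) (insert (fm N A) Δ) →
      FreshFor x Γ → FreshFor x Δ → FreshFor y Γ → FreshFor y Δ →
      Der Γ (insert (fm (.lett x y M N) A) Δ)
  | appR {Γ Δ M N A B} :
      Der Γ (insert (fm M (.arrow B A)) Δ) → Der Γ (insert (fm N B) Δ) →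
      Der Γ (insert (fm (.app M N) A) Δ)
  | pairR {Γ Δ M N A B} :
      Der Γ (insert (fm M A) Δ) → Der Γ (insert (fm N B) Δ) →
      Der Γ (insert (fm (.pair M N) (.prod A B)) Δ)
  | absR {Γ Δ : Finset Formula} {x : ℕ} {M : Tm} {A B : Ty} :
      Der (insert (fm (.var x) B) Γ) (insert (fm M A) Δ) →
      FreshFor x Γ → FreshFor x Δ →
      Der Γ (insert (fm (.abs x M) (.arrow B A)) Δ)
  | abnR {Γ Δ : Finset Formula} {x : ℕ} {M : Tm} {B : Ty} {F : FTy} :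
      Der (insert (fm M F.toTy) Γ) (insert (fm (.var x) B) Δ) →
      FreshFor x Γ → FreshFor x Δ →
      Der Γ (insert (fm (.abs x M) (.narrow B F)) Δ)
  | fixR {Γ Δ : Finset Formula} {x : ℕ} {M : Tm} {A : Ty} :
      Der (insert (fm (.var x) A) Γ) (insert (fm M A) Δ) →
      FreshFor x Γ → FreshFor x Δ →
      Der Γ (insert (fm (.fix x M) A) Δ)
  | ifzR {Γ Δ M N P A} :
      Der Γ (insert (fm M .nat) Δ) → Der Γ (insert (fm N A) Δ) →
      Der Γ (insert (fm P A) Δ) →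
      Der Γ (insert (fm (.ifz M N P) A) Δ)
  | succL {Γ Δ M} : Der (insert (fm M .nat) Γ) Δ → Der (insert (fm (.succ M) .nat) Γ) Δ
  | predL {Γ Δ M} : Der (insert (fm M .nat) Γ) Δ → Der (insert (fm (.pred M) .nat) Γ) Δ
  | appL {Γ Δ : Finset Formula} {M N : Tm} {B : Ty} {A : FTy} :
      Der Γ (insert (fm M (.narrow B A)) Δ) → Der (insert (fm N B) Γ) Δ →
      Der (insert (fm (.app M N) A.toTy) Γ) Δ
  | pairL1 {Γ Δ M1 M2 A1 A2} : Der (insert (fm M1 A1) Γ) Δ →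
      Der (insert (fm (.pair M1 M2) (.prod A1 A2)) Γ) Δ
  | pairL2 {Γ Δ M1 M2 A1 A2} : Der (insert (fm M2 A2) Γ) Δ →
      Der (insert (fm (.pair M1 M2) (.prod A1 A2)) Γ) Δ
  | letL1 {Γ Δ : Finset Formula} {x y : ℕ} {M N : Tm} {A : Ty} :
      Der (insert (fm N A) Γ) Δ →
      FreshFor x Γ → FreshFor x Δ → FreshFor y Γ → FreshFor y Δ →
      Der (insert (fm (.lett x y M N) A) Γ) Δ
  | letL2 {Γ Δ : Finset Formula} {x y : ℕ} {M N : Tm} {A B1 B2 : Ty} :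
      Der (insert (fm M (.prod B1 B2)) Γ) Δ →
      Der (insert (fm N A) Γ) (insert (fm (.var x) B1) Δ) →
      Der (insert (fm N A) Γ) (insert (fm (.var y) B2) Δ) →
      FreshFor x Γ → FreshFor x Δ → FreshFor y Γ → FreshFor y Δ →
      Der (insert (fm (.lett x y M N) A) Γ) Δ
  | ifzL1 {Γ Δ M N P A} : Der (insert (fm M .nat) Γ) Δ →
      Der (insert (fm (.ifz M N P) A) Γ) Δ
  | ifzL2 {Γ Δ M N P A} : Der (insert (fm N A) Γ) Δ → Der (insert (fm P A) Γ) Δ →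
      Der (insert (fm (.ifz M N P) A) Γ) Δ
  | okVarR (Γ Δ : Finset Formula) (x : ℕ) : Der Γ (insert (fm (.var x) .ok) Δ)
  | okL {Γ Δ M A} : Der (insert (fm M .ok) Γ) Δ → Der (insert (fm M A) Γ) Δ
  | okR {Γ Δ M A} : Der Γ (insert (fm M A) Δ) → Der Γ (insert (fm M .ok) Δ)
  | okApL1 {Γ Δ M N A} : Der (insert (fm M (.narrow .ok A)) Γ) Δ →
      Der (insert (fm (.app M N) .ok) Γ) Δ
  | okApL2 {Γ Δ M N} : Der (insert (fm N .ok) Γ) Δ → Der (insert (fm (.app M N) .ok) Γ) Δ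
  | okSL {Γ Δ M} : Der (insert (fm M .nat) Γ) Δ → Der (insert (fm (.succ M) .ok) Γ) Δ
  | okPL {Γ Δ M} : Der (insert (fm M .nat) Γ) Δ → Der (insert (fm (.pred M) .ok) Γ) Δ
  | okPrL1 {Γ Δ M1 M2} : Der (insert (fm M1 .ok) Γ) Δ →
      Der (insert (fm (.pair M1 M2) .ok) Γ) Δ
  | okPrL2 {Γ Δ M1 M2} : Der (insert (fm M2 .ok) Γ) Δ →
      Der (insert (fm (.pair M1 M2) .ok) Γ) Δ

/-- Simultaneous substitution by a valuation (total substitution); suitable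
since valuations map variables to closed terms. -/
def msubst (θ : ℕ → Tm) : Tm → Tm
  | .var y => θ y
  | .zero => .zero
  | .succ M => .succ (msubst θ M)
  | .pred M => .pred (msubst θ M)
  | .ifz M P Q => .ifz (msubst θ M) (msubst θ P) (msubst θ Q)
  | .abs y M => .abs y (msubst (Function.update θ y (.var y)) M)
  | .app M P => .app (msubst θ M) (msubst θ P)
  | .fix y M => .fix y (msubst (Function.update θ y (.var y)) M)
  | .pair M P => .pair (msubst θ M) (msubst θ P)
  | .lett y z M P =>
      .lett y z (msubst θ M)
        (msubst (Function.update (Function.update θ y (.var y)) z (.var z)) P)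

/-- A valuation: a substitution by closed terms. -/
def ClosedVal (θ : ℕ → Tm) : Prop := ∀ x, ClosedTm (θ x)

/-- `θ` satisfies `M : A` on the left: `Mθ ∈ T⟦A⟧`. -/
def SatL (θ : ℕ → Tm) (φ : Formula) : Prop := TSem (Sem φ.ty) (msubst θ φ.tm)

/-- `θ` satisfies `M : A` on the right: `Mθ ∈ T̄⟦A⟧`. -/
def SatR (θ : ℕ → Tm) (φ : Formula) : Prop := TBarSem (Sem φ.ty) (msubst θ φ.tm)

/-- Truth of a judgement: `Γ ⊨ Δ`. -/
def Models (Γ Δ : Finset Formula) : Prop :=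
  ∀ θ : ℕ → Tm, ClosedVal θ → (∀ φ ∈ Γ, SatL θ φ) → ∃ φ ∈ Δ, SatR θ φ



section Basic

@[simp] lemma numeral_zero : numeral 0 = .zero := rfl
@[simp] lemma numeral_succ (n : ℕ) : numeral (n+1) = .succ (numeral n) := rfl

lemma subst_of_not_mem_fv {y : ℕ} {N T : Tm} (h : y ∉ fv T) : subst y N T = T := by
  induction T with
  | var z => simp [fv] at h; simp [subst, Ne.symm h]
  | zero => rfl
  | succ T ih => simp [fv] at h; simp [subst, ih h]
  | pred T ih => simp [fv] at h; simp [subst, ih h]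
  | ifz T1 T2 T3 ih1 ih2 ih3 =>
      simp [fv] at h; simp [subst, ih1 h.1, ih2 h.2.1, ih3 h.2.2]
  | abs z T ih =>
      by_cases hz : z = y
      · simp [subst, hz]
      · simp [fv, Finset.mem_sdiff, hz] at h
        simp [subst, hz, ih (fun hy => hz ((h hy).symm))]
  | app T1 T2 ih1 ih2 => simp [fv] at h; simp [subst, ih1 h.1, ih2 h.2]
  | fix z T ih =>
      by_cases hz : z = y
      · simp [subst, hz]
      · simp [fv, Finset.mem_sdiff, hz] at h
        simp [subst, hz, ih (fun hy => hz ((h hy).symm))]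
  | pair T1 T2 ih1 ih2 => simp [fv] at h; simp [subst, ih1 h.1, ih2 h.2]
  | lett a b T1 T2 ih1 ih2 =>
      simp [fv] at h
      by_cases hab : a = y ∨ b = y
      · simp [subst, hab, ih1 h.1]
      · push_neg at hab
        have h2 : y ∉ fv T2 := by
          intro hy
          have := h.2 hy
          tauto
        simp [subst, hab.1, hab.2, ih1 h.1, ih2 h2]

lemma subst_closed {y : ℕ} {N T : Tm} (h : ClosedTm T) : subst y N T = T :=
  subst_of_not_mem_fv (by simp [ClosedTm] at h; simp [h])

lemma fv_subst_subset (y : ℕ) (N T : Tm) :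
    fv (subst y N T) ⊆ (fv T \ {y}) ∪ fv N := by
  induction T with
  | var z =>
      by_cases hz : z = y
      · subst hz; simp only [subst, if_pos rfl]
        exact Finset.subset_union_right
      · simp only [subst, hz, if_false]
        intro a ha; simp [fv] at ha; simp [fv, ha, hz]
  | zero => simp [subst, fv]
  | succ T ih => simpa [subst, fv] using ih
  | pred T ih => simpa [subst, fv] using ih
  | ifz T1 T2 T3 ih1 ih2 ih3 =>
      simp only [subst, fv]
      intro a ha
      simp only [Finset.mem_union] at ha
      rcases ha with (ha|ha)|ha
      · rcases Finset.mem_union.1 (ih1 ha) with h|h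
        · simp at h ⊢; tauto
        · simp [h]
      · rcases Finset.mem_union.1 (ih2 ha) with h|h
        · simp at h ⊢; tauto
        · simp [h]
      · rcases Finset.mem_union.1 (ih3 ha) with h|h
        · simp at h ⊢; tauto
        · simp [h]
  | abs z T ih =>
      by_cases hz : z = y
      · subst hz; simp only [subst, if_pos rfl]
        intro a ha; simp [fv] at ha; simp [fv, ha]
      · simp only [subst, hz, if_false, fv]
        intro a ha
        simp only [Finset.mem_sdiff, Finset.mem_singleton] at ha
        rcases Finset.mem_union.1 (ih ha.1) with h|h
        · simp at h ⊢; tauto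
        · simp [h]
  | app T1 T2 ih1 ih2 =>
      simp only [subst, fv]
      intro a ha
      rcases Finset.mem_union.1 ha with ha|ha
      · rcases Finset.mem_union.1 (ih1 ha) with h|h
        · simp at h ⊢; tauto
        · simp [h]
      · rcases Finset.mem_union.1 (ih2 ha) with h|h
        · simp at h ⊢; tauto
        · simp [h]
  | fix z T ih =>
      by_cases hz : z = y
      · subst hz; simp only [subst, if_pos rfl]
        intro a ha; simp [fv] at ha; simp [fv, ha]
      · simp only [subst, hz, if_false, fv]
        intro a ha
        simp only [Finset.mem_sdiff, Finset.mem_singleton] at ha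
        rcases Finset.mem_union.1 (ih ha.1) with h|h
        · simp at h ⊢; tauto
        · simp [h]
  | pair T1 T2 ih1 ih2 =>
      simp only [subst, fv]
      intro a ha
      rcases Finset.mem_union.1 ha with ha|ha
      · rcases Finset.mem_union.1 (ih1 ha) with h|h
        · simp at h ⊢; tauto
        · simp [h]
      · rcases Finset.mem_union.1 (ih2 ha) with h|h
        · simp at h ⊢; tauto
        · simp [h]
  | lett a b T1 T2 ih1 ih2 =>
      by_cases hab : a = y ∨ b = y
      · simp only [subst, hab, if_true, fv]
        intro c hc
        rcases Finset.mem_union.1 hc with hc|hc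
        · rcases Finset.mem_union.1 (ih1 hc) with h|h
          · simp at h ⊢; tauto
          · simp [h]
        · simp at hc ⊢
          rcases hab with h|h
          · subst h; tauto
          · subst h; tauto
      · simp only [subst, hab, if_false, fv]
        push_neg at hab
        intro c hc
        rcases Finset.mem_union.1 hc with hc|hc
        · rcases Finset.mem_union.1 (ih1 hc) with h|h
          · simp at h ⊢; tauto
          · simp [h]
        · simp only [Finset.mem_sdiff, Finset.mem_insert, Finset.mem_singleton] at hc
          rcases Finset.mem_union.1 (ih2 hc.1) with h|h
          · simp at h ⊢; tauto
          · simp [h]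

lemma fv_subset_fv_subst (y : ℕ) (N T : Tm) :
    fv T \ {y} ⊆ fv (subst y N T) := by
  induction T with
  | var z =>
      intro a ha; simp [fv] at ha
      rcases ha with ⟨h1, h2⟩; subst h1
      simp [subst, fv, fun hh => h2 hh]
  | zero => simp [fv]
  | succ T ih => simpa [subst, fv] using ih
  | pred T ih => simpa [subst, fv] using ih
  | ifz T1 T2 T3 ih1 ih2 ih3 =>
      intro a ha
      simp only [fv, Finset.mem_sdiff, Finset.mem_union, Finset.mem_singleton] at ha
      simp only [subst, fv, Finset.mem_union]
      rcases ha with ⟨(h|h)|h, hy⟩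
      · exact Or.inl (Or.inl (ih1 (by simp [h, hy])))
      · exact Or.inl (Or.inr (ih2 (by simp [h, hy])))
      · exact Or.inr (ih3 (by simp [h, hy]))
  | abs z T ih =>
      by_cases hz : z = y
      · subst hz; simp [subst, fv]
      · intro a ha
        simp only [fv, Finset.mem_sdiff, Finset.mem_singleton] at ha
        simp only [subst, hz, if_false, fv, Finset.mem_sdiff, Finset.mem_singleton]
        exact ⟨ih (by simp [ha.1.1, ha.2]), ha.1.2⟩
  | app T1 T2 ih1 ih2 =>
      intro a ha
      simp only [fv, Finset.mem_sdiff, Finset.mem_union, Finset.mem_singleton] at ha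
      simp only [subst, fv, Finset.mem_union]
      rcases ha with ⟨h|h, hy⟩
      · exact Or.inl (ih1 (by simp [h, hy]))
      · exact Or.inr (ih2 (by simp [h, hy]))
  | fix z T ih =>
      by_cases hz : z = y
      · subst hz; simp [subst, fv]
      · intro a ha
        simp only [fv, Finset.mem_sdiff, Finset.mem_singleton] at ha
        simp only [subst, hz, if_false, fv, Finset.mem_sdiff, Finset.mem_singleton]
        exact ⟨ih (by simp [ha.1.1, ha.2]), ha.1.2⟩
  | pair T1 T2 ih1 ih2 =>
      intro a ha
      simp only [fv, Finset.mem_sdiff, Finset.mem_union, Finset.mem_singleton] at ha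
      simp only [subst, fv, Finset.mem_union]
      rcases ha with ⟨h|h, hy⟩
      · exact Or.inl (ih1 (by simp [h, hy]))
      · exact Or.inr (ih2 (by simp [h, hy]))
  | lett a b T1 T2 ih1 ih2 =>
      intro c hc
      simp only [fv, Finset.mem_sdiff, Finset.mem_union, Finset.mem_insert,
        Finset.mem_singleton] at hc
      obtain ⟨h|⟨h1,h2⟩, hy⟩ := hc
      · simp only [subst, fv, Finset.mem_union]
        exact Or.inl (ih1 (by simp [h, hy]))
      · by_cases hab : a = y ∨ b = y
        · simp only [subst, hab, if_true, fv, Finset.mem_union]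
          right; simp [h1]; tauto
        · simp only [subst, hab, if_false, fv, Finset.mem_union]
          right
          simp only [Finset.mem_sdiff, Finset.mem_insert, Finset.mem_singleton]
          refine ⟨ih2 (by simp [h1, hy]), by tauto⟩

end Basic

section Steps

lemma numeral_ne_pair (n : ℕ) (V W : Tm) : numeral n ≠ .pair V W := by
  cases n <;> simp

lemma numeral_ne_abs (n : ℕ) (y : ℕ) (B : Tm) : numeral n ≠ .abs y B := by
  cases n <;> simp

lemma numeral_ne_var (n : ℕ) (y : ℕ) : numeral n ≠ .var y := by
  cases n <;> simp

lemma numeral_ne_fix (n : ℕ) (y : ℕ) (B : Tm) : numeral n ≠ .fix y B := by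
  cases n <;> simp

lemma numeral_ne_app (n : ℕ) (B C : Tm) : numeral n ≠ .app B C := by
  cases n <;> simp

lemma numeral_inj {m n : ℕ} (h : numeral m = numeral n) : m = n := by
  induction m generalizing n with
  | zero => cases n with
    | zero => rfl
    | succ k => simp [numeral] at h
  | succ k ih => cases n with
    | zero => simp [numeral] at h
    | succ l => simp [numeral] at h; rw [ih h]

@[simp] lemma fv_numeral (n : ℕ) : fv (numeral n) = ∅ := by
  induction n with
  | zero => rfl
  | succ k ih => simp [fv, ih]

lemma succ_eq_numeral {P : Tm} {n : ℕ} (h : Tm.succ P = numeral n) :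
    ∃ m, n = m + 1 ∧ P = numeral m := by
  cases n with
  | zero => simp [numeral] at h
  | succ m => simp [numeral] at h; exact ⟨m, rfl, h⟩

lemma isValue_succ {P : Tm} (h : IsValue (.succ P)) : ∃ m, P = numeral m := by
  generalize hV : Tm.succ P = V at h
  induction h with
  | var x => simp at hV
  | num n =>
      rcases succ_eq_numeral hV with ⟨m, _, hm⟩
      exact ⟨m, hm⟩
  | pair _ _ _ _ => simp at hV
  | abs _ _ => simp at hV

lemma isValue_pair {V W : Tm} (h : IsValue (.pair V W)) : IsValue V ∧ IsValue W := by
  generalize hV : Tm.pair V W = U at h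
  induction h with
  | var x => simp at hV
  | num n => exact absurd hV.symm (numeral_ne_pair _ _ _)
  | pair hV' hW' _ _ =>
      cases hV
      exact ⟨hV', hW'⟩
  | abs _ _ => simp at hV

lemma numeral_no_step (n : ℕ) : ∀ N, ¬ Step (numeral n) N := by
  induction n with
  | zero => intro N h; cases h
  | succ m ih =>
      intro N h
      rw [numeral_succ] at h
      cases h with
      | succ_ctx h => exact ih _ h

lemma value_no_step {V : Tm} (h : IsValue V) : ∀ N, ¬ Step V N := by
  induction h with
  | var x => intro N h; cases h
  | num n => exact numeral_no_step n
  | pair hV hW ihV ihW =>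
      intro N h
      cases h with
      | pair_left h => exact ihV _ h
      | pair_right _ h => exact ihW _ h
  | abs x M => intro N h; cases h

lemma value_normal {V : Tm} (h : IsValue V) : NormalForm V :=
  fun ⟨N, hN⟩ => value_no_step h N hN

lemma step_ifz_inv {Q N P R : Tm} (h : Step (.ifz Q N P) R) :
    (∃ Q', Step Q Q' ∧ R = .ifz Q' N P) ∨ (Q = numeral 0 ∧ R = N) ∨
      (∃ n, Q = numeral (n+1) ∧ R = P) := by
  generalize hM : Tm.ifz Q N P = S at h
  cases h <;> try (cases hM)
  · exact Or.inr (Or.inl ⟨rfl, rfl⟩)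
  · exact Or.inr (Or.inr ⟨_, rfl, rfl⟩)
  · exact Or.inl ⟨_, ‹_›, rfl⟩

lemma step_pred_inv {Q R : Tm} (h : Step (.pred Q) R) :
    (∃ Q', Step Q Q' ∧ R = .pred Q') ∨ (Q = numeral 0 ∧ R = numeral 0) ∨
      (∃ n, Q = numeral (n+1) ∧ R = numeral n) := by
  generalize hM : Tm.pred Q = S at h
  cases h <;> try (cases hM)
  · exact Or.inr (Or.inl ⟨rfl, rfl⟩)
  · exact Or.inr (Or.inr ⟨_, rfl, rfl⟩)
  · exact Or.inl ⟨_, ‹_›, rfl⟩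

lemma step_det {M N1 N2 : Tm} (h1 : Step M N1) (h2 : Step M N2) : N1 = N2 := by
  induction h1 generalizing N2 with
  | ifz_zero =>
      rcases step_ifz_inv h2 with ⟨Q', hQ, _⟩ | ⟨_, rfl⟩ | ⟨n, hn, rfl⟩
      · exact absurd hQ (numeral_no_step 0 _)
      · rfl
      · exact absurd hn.symm (by intro hh; exact Nat.succ_ne_zero n (numeral_inj hh))
  | ifz_succ =>
      rcases step_ifz_inv h2 with ⟨Q', hQ, _⟩ | ⟨hn, rfl⟩ | ⟨n, hn, rfl⟩
      · exact absurd hQ (numeral_no_step _ _)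
      · exact absurd hn (by intro hh; exact Nat.succ_ne_zero _ (numeral_inj hh))
      · rfl
  | lett_beta hV hW =>
      cases h2 with
      | lett_beta _ _ => rfl
      | lett_ctx h => exact absurd h (value_no_step (IsValue.pair hV hW) _)
  | fix_step => cases h2 with | fix_step => rfl
  | pred_zero =>
      rcases step_pred_inv h2 with ⟨Q', hQ, _⟩ | ⟨_, rfl⟩ | ⟨n, hn, rfl⟩
      · exact absurd hQ (numeral_no_step 0 _)
      · rfl
      · exact absurd hn.symm (by intro hh; exact Nat.succ_ne_zero n (numeral_inj hh))
  | pred_succ =>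
      rcases step_pred_inv h2 with ⟨Q', hQ, _⟩ | ⟨hn, rfl⟩ | ⟨n, hn, rfl⟩
      · exact absurd hQ (numeral_no_step _ _)
      · exact absurd hn (by intro hh; exact Nat.succ_ne_zero _ (numeral_inj hh))
      · rw [Nat.succ_injective (numeral_inj hn)]
  | beta hV =>
      cases h2 with
      | beta _ => rfl
      | app_right h => exact absurd h (value_no_step hV _)
      | app_left h => exact absurd h (value_no_step (IsValue.abs _ _) _)
  | succ_ctx h ih => cases h2 with | succ_ctx h' => rw [ih h']
  | pred_ctx h ih =>
      rcases step_pred_inv h2 with ⟨Q', hQ, rfl⟩ | ⟨rfl, rfl⟩ | ⟨n, rfl, rfl⟩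
      · rw [ih hQ]
      · exact absurd h (numeral_no_step 0 _)
      · exact absurd h (numeral_no_step _ _)
  | pair_left h ih =>
      cases h2 with
      | pair_left h' => rw [ih h']
      | pair_right hV _ => exact absurd h (value_no_step hV _)
  | pair_right hV h ih =>
      cases h2 with
      | pair_left h' => exact absurd h' (value_no_step hV _)
      | pair_right _ h' => rw [ih h']
  | lett_ctx h ih =>
      cases h2 with
      | lett_beta hV hW => exact absurd h (value_no_step (IsValue.pair hV hW) _)
      | lett_ctx h' => rw [ih h']
  | ifz_ctx h ih =>
      rcases step_ifz_inv h2 with ⟨Q', hQ, rfl⟩ | ⟨rfl, rfl⟩ | ⟨n, rfl, rfl⟩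
      · rw [ih hQ]
      · exact absurd h (numeral_no_step 0 _)
      · exact absurd h (numeral_no_step _ _)
  | app_right h ih =>
      cases h2 with
      | beta hV => exact absurd h (value_no_step hV _)
      | app_right h' => rw [ih h']
      | app_left h' => exact absurd h' (value_no_step (IsValue.abs _ _) _)
  | app_left h ih =>
      cases h2 with
      | beta _ => exact absurd h (value_no_step (IsValue.abs _ _) _)
      | app_right h' => exact absurd h (value_no_step (IsValue.abs _ _) _)
      | app_left h' => rw [ih h']

lemma nf_unique {M N1 N2 : Tm} (h1 : Steps M N1) (hn1 : NormalForm N1)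
    (hn2 : NormalForm N2) : Steps M N2 → N1 = N2 := by
  induction h1 using Relation.ReflTransGen.head_induction_on with
  | refl =>
      intro h2
      rcases Relation.ReflTransGen.cases_head h2 with rfl | ⟨c, hc, _⟩
      · rfl
      · exact absurd ⟨_, hc⟩ hn1
  | head h hs ih =>
      intro h2
      rcases Relation.ReflTransGen.cases_head h2 with rfl | ⟨c, hc, hcs⟩
      · exact absurd ⟨_, h⟩ hn2
      · exact ih ((step_det h hc) ▸ hcs)

lemma steps_succ {M N : Tm} (h : Steps M N) : Steps (.succ M) (.succ N) :=
  Relation.ReflTransGen.lift (fun t => Tm.succ t) (fun _ _ => Step.succ_ctx) _ _ h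

lemma steps_pred {M N : Tm} (h : Steps M N) : Steps (.pred M) (.pred N) :=
  Relation.ReflTransGen.lift (fun t => Tm.pred t) (fun _ _ => Step.pred_ctx) _ _ h

lemma steps_pair_left {M N P : Tm} (h : Steps M N) : Steps (.pair M P) (.pair N P) :=
  Relation.ReflTransGen.lift (fun t => Tm.pair t P) (fun _ _ => Step.pair_left) _ _ h

lemma steps_pair_right {V M N : Tm} (hV : IsValue V) (h : Steps M N) :
    Steps (.pair V M) (.pair V N) :=
  Relation.ReflTransGen.lift (fun t => Tm.pair V t) (fun _ _ => Step.pair_right hV) _ _ h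

lemma steps_lett {a b : ℕ} {M N P : Tm} (h : Steps M N) :
    Steps (.lett a b M P) (.lett a b N P) :=
  Relation.ReflTransGen.lift (fun t => Tm.lett a b t P) (fun _ _ => Step.lett_ctx) _ _ h

lemma steps_ifz {M N P Q : Tm} (h : Steps M N) : Steps (.ifz M P Q) (.ifz N P Q) :=
  Relation.ReflTransGen.lift (fun t => Tm.ifz t P Q) (fun _ _ => Step.ifz_ctx) _ _ h

lemma steps_app_left {M N P : Tm} (h : Steps M N) : Steps (.app M P) (.app N P) :=
  Relation.ReflTransGen.lift (fun t => Tm.app t P) (fun _ _ => Step.app_left) _ _ h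

lemma steps_app_right {a : ℕ} {B M N : Tm} (h : Steps M N) :
    Steps (.app (.abs a B) M) (.app (.abs a B) N) :=
  Relation.ReflTransGen.lift (fun t => Tm.app (.abs a B) t) (fun _ _ => Step.app_right) _ _ h

lemma step_fv {M N : Tm} (h : Step M N) : fv N ⊆ fv M := by
  induction h with
  | ifz_zero => intro c hc; simp only [fv, Finset.mem_union]; tauto
  | ifz_succ => intro c hc; simp only [fv, Finset.mem_union]; tauto
  | @lett_beta a b V W B _ _ =>
      intro c hc
      rcases Finset.mem_union.1 (fv_subst_subset b W (subst a V B) hc) with h|h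
      · rcases Finset.mem_union.1 (fv_subst_subset a V B (Finset.mem_sdiff.1 h).1) with h'|h'
        · simp only [fv, Finset.mem_union, Finset.mem_sdiff, Finset.mem_insert,
            Finset.mem_singleton] at h ⊢
          simp only [Finset.mem_sdiff, Finset.mem_singleton] at h'
          tauto
        · simp only [fv, Finset.mem_union]
          left; left; exact h'
      · simp only [fv, Finset.mem_union]
        left; right; exact h
  | @fix_step a B =>
      intro c hc
      rcases Finset.mem_union.1 (fv_subst_subset a (.fix a B) B hc) with h|h
      · simp only [fv, Finset.mem_sdiff, Finset.mem_singleton] at h ⊢; tauto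
      · exact h
  | pred_zero => simp [fv]
  | pred_succ => simp [fv]
  | @beta a B V _ =>
      intro c hc
      rcases Finset.mem_union.1 (fv_subst_subset a V B hc) with h|h
      · simp only [fv, Finset.mem_union, Finset.mem_sdiff, Finset.mem_singleton] at h ⊢
        tauto
      · simp only [fv, Finset.mem_union]; right; exact h
  | succ_ctx h ih => simpa [fv] using ih
  | pred_ctx h ih => simpa [fv] using ih
  | pair_left h ih =>
      intro c hc; simp only [fv, Finset.mem_union] at hc ⊢
      rcases hc with hc|hc
      exacts [Or.inl (ih hc), Or.inr hc]
  | pair_right _ h ih =>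
      intro c hc; simp only [fv, Finset.mem_union] at hc ⊢
      rcases hc with hc|hc
      exacts [Or.inl hc, Or.inr (ih hc)]
  | lett_ctx h ih =>
      intro c hc; simp only [fv, Finset.mem_union] at hc ⊢
      rcases hc with hc|hc
      exacts [Or.inl (ih hc), Or.inr hc]
  | ifz_ctx h ih =>
      intro c hc; simp only [fv, Finset.mem_union] at hc ⊢
      rcases hc with (hc|hc)|hc
      exacts [Or.inl (Or.inl (ih hc)), Or.inl (Or.inr hc), Or.inr hc]
  | app_right h ih =>
      intro c hc; simp only [fv, Finset.mem_union] at hc ⊢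
      rcases hc with hc|hc
      exacts [Or.inl hc, Or.inr (ih hc)]
  | app_left h ih =>
      intro c hc; simp only [fv, Finset.mem_union] at hc ⊢
      rcases hc with hc|hc
      exacts [Or.inl (ih hc), Or.inr hc]

lemma steps_fv {M N : Tm} (h : Steps M N) : fv N ⊆ fv M := by
  induction h with
  | refl => exact fun _ h => h
  | tail _ h ih => exact (step_fv h).trans ih

lemma steps_closed {M N : Tm} (h : Steps M N) (hM : ClosedTm M) : ClosedTm N := by
  simp only [ClosedTm] at *
  exact Finset.subset_empty.1 (hM ▸ steps_fv h)

end Steps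

/-- `Approx x M n P Q`: `P` is obtained from `Q` by replacing occurrences of the
fixpoint `fix x.M` by approximants `fixApprox x M m` with `m ≥ n`. -/
inductive Approx (x : ℕ) (M : Tm) : ℕ → Tm → Tm → Prop
  | base {n m : ℕ} : n ≤ m → Approx x M n (fixApprox x M m) (.fix x M)
  | var {n : ℕ} (y : ℕ) : Approx x M n (.var y) (.var y)
  | zero {n : ℕ} : Approx x M n .zero .zero
  | succ {n P Q} : Approx x M n P Q → Approx x M n (.succ P) (.succ Q)
  | pred {n P Q} : Approx x M n P Q → Approx x M n (.pred P) (.pred Q)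
  | ifz {n P Q P1 Q1 P2 Q2} : Approx x M n P Q → Approx x M n P1 Q1 →
      Approx x M n P2 Q2 → Approx x M n (.ifz P P1 P2) (.ifz Q Q1 Q2)
  | abs {n P Q} (y : ℕ) : Approx x M n P Q → Approx x M n (.abs y P) (.abs y Q)
  | app {n P Q P1 Q1} : Approx x M n P Q → Approx x M n P1 Q1 →
      Approx x M n (.app P P1) (.app Q Q1)
  | fixc {n P Q} (y : ℕ) : Approx x M n P Q → Approx x M n (.fix y P) (.fix y Q)
  | pair {n P Q P1 Q1} : Approx x M n P Q → Approx x M n P1 Q1 →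
      Approx x M n (.pair P P1) (.pair Q Q1)
  | lett {n P Q P1 Q1} (a b : ℕ) : Approx x M n P Q → Approx x M n P1 Q1 →
      Approx x M n (.lett a b P P1) (.lett a b Q Q1)

section Approx

variable {x : ℕ} {M : Tm}

lemma approx_refl (n : ℕ) (T : Tm) : Approx x M n T T := by
  induction T with
  | var y => exact Approx.var y
  | zero => exact Approx.zero
  | succ T ih => exact Approx.succ ih
  | pred T ih => exact Approx.pred ih
  | ifz T1 T2 T3 ih1 ih2 ih3 => exact Approx.ifz ih1 ih2 ih3
  | abs y T ih => exact Approx.abs y ih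
  | app T1 T2 ih1 ih2 => exact Approx.app ih1 ih2
  | fix y T ih => exact Approx.fixc y ih
  | pair T1 T2 ih1 ih2 => exact Approx.pair ih1 ih2
  | lett a b T1 T2 ih1 ih2 => exact Approx.lett a b ih1 ih2

lemma approx_mono {m n : ℕ} {P Q : Tm} (hmn : m ≤ n) (h : Approx x M n P Q) :
    Approx x M m P Q := by
  induction h with
  | base h => exact Approx.base (hmn.trans h)
  | var y => exact Approx.var y
  | zero => exact Approx.zero
  | succ _ ih => exact Approx.succ ih
  | pred _ ih => exact Approx.pred ih
  | ifz _ _ _ ih1 ih2 ih3 => exact Approx.ifz ih1 ih2 ih3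
  | abs y _ ih => exact Approx.abs y ih
  | app _ _ ih1 ih2 => exact Approx.app ih1 ih2
  | fixc y _ ih => exact Approx.fixc y ih
  | pair _ _ ih1 ih2 => exact Approx.pair ih1 ih2
  | lett a b _ _ ih1 ih2 => exact Approx.lett a b ih1 ih2

lemma closed_fixApprox (hM : ClosedTm (.fix x M)) (m : ℕ) :
    ClosedTm (fixApprox x M m) := by
  induction m with
  | zero =>
      simp [fixApprox, divTm, ClosedTm, fv]
  | succ k ih =>
      simp only [ClosedTm, fv] at hM ⊢
      simp only [fixApprox]
      apply Finset.subset_empty.1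
      refine (fv_subst_subset x (fixApprox x M k) M).trans ?_
      rw [hM, ih]
      simp

lemma approx_subst (hM : ClosedTm (.fix x M)) {n : ℕ} {V W P Q : Tm} (y : ℕ)
    (hVW : Approx x M n V W) (hPQ : Approx x M n P Q) :
    Approx x M n (subst y V P) (subst y W Q) := by
  induction hPQ with
  | @base m h =>
      rw [subst_closed (closed_fixApprox hM _), subst_closed hM]
      exact Approx.base h
  | var z =>
      by_cases hz : z = y
      · simp [subst, hz]; exact hVW
      · simp [subst, hz]; exact Approx.var z
  | zero => exact Approx.zero
  | succ _ ih => exact Approx.succ ih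
  | pred _ ih => exact Approx.pred ih
  | ifz _ _ _ ih1 ih2 ih3 => exact Approx.ifz ih1 ih2 ih3
  | @abs P Q z h ih =>
      by_cases hz : z = y
      · simp only [subst, if_pos hz]
        exact Approx.abs z h
      · simp only [subst, hz, if_false]
        exact Approx.abs z ih
  | app _ _ ih1 ih2 => exact Approx.app ih1 ih2
  | @fixc P Q z h ih =>
      by_cases hz : z = y
      · simp only [subst, if_pos hz]
        exact Approx.fixc z h
      · simp only [subst, hz, if_false]
        exact Approx.fixc z ih
  | pair _ _ ih1 ih2 => exact Approx.pair ih1 ih2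
  | @lett P Q P1 Q1 a b h h1 ih ih1 =>
      by_cases hab : a = y ∨ b = y
      · simp only [subst, if_pos hab]
        exact Approx.lett a b ih h1
      · simp only [subst, hab, if_false]
        exact Approx.lett a b ih ih1

/-! ### Right (downward) inversion lemmas -/

lemma approx_var_right {n : ℕ} {P : Tm} {z : ℕ} (h : Approx x M n P (.var z)) :
    P = .var z := by
  generalize hq : Tm.var z = Q at h
  cases h with
  | base => simp at hq
  | var y => injection hq with h1; subst h1; rfl
  | zero => simp at hq
  | succ => simp at hq
  | pred => simp at hq
  | ifz => simp at hq
  | abs => simp at hq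
  | app => simp at hq
  | fixc => simp at hq
  | pair => simp at hq
  | lett => simp at hq

lemma approx_zero_right {n : ℕ} {P : Tm} (h : Approx x M n P .zero) :
    P = .zero := by
  generalize hq : Tm.zero = Q at h
  cases h with
  | base => simp at hq
  | var => simp at hq
  | zero => rfl
  | succ => simp at hq
  | pred => simp at hq
  | ifz => simp at hq
  | abs => simp at hq
  | app => simp at hq
  | fixc => simp at hq
  | pair => simp at hq
  | lett => simp at hq

lemma approx_succ_right {n : ℕ} {P Q1 : Tm} (h : Approx x M n P (.succ Q1)) :
    ∃ P1, P = .succ P1 ∧ Approx x M n P1 Q1 := by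
  generalize hq : Tm.succ Q1 = Q at h
  cases h with
  | base => simp at hq
  | var => simp at hq
  | zero => simp at hq
  | succ h1 => injection hq with h2; subst h2; exact ⟨_, rfl, h1⟩
  | pred => simp at hq
  | ifz => simp at hq
  | abs => simp at hq
  | app => simp at hq
  | fixc => simp at hq
  | pair => simp at hq
  | lett => simp at hq

lemma approx_abs_right {n : ℕ} {P B : Tm} {y : ℕ} (h : Approx x M n P (.abs y B)) :
    ∃ P1, P = .abs y P1 ∧ Approx x M n P1 B := by
  generalize hq : Tm.abs y B = Q at h
  cases h with
  | base => simp at hq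
  | var => simp at hq
  | zero => simp at hq
  | succ => simp at hq
  | pred => simp at hq
  | ifz => simp at hq
  | abs z h1 => injection hq with h2 h3; subst h2; subst h3; exact ⟨_, rfl, h1⟩
  | app => simp at hq
  | fixc => simp at hq
  | pair => simp at hq
  | lett => simp at hq

lemma approx_pair_right {n : ℕ} {P Q1 Q2 : Tm} (h : Approx x M n P (.pair Q1 Q2)) :
    ∃ P1 P2, P = .pair P1 P2 ∧ Approx x M n P1 Q1 ∧ Approx x M n P2 Q2 := by
  generalize hq : Tm.pair Q1 Q2 = Q at h
  cases h with
  | base => simp at hq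
  | var => simp at hq
  | zero => simp at hq
  | succ => simp at hq
  | pred => simp at hq
  | ifz => simp at hq
  | abs => simp at hq
  | app => simp at hq
  | fixc => simp at hq
  | pair h1 h2 => injection hq with h3 h4; subst h3; subst h4; exact ⟨_, _, rfl, h1, h2⟩
  | lett => simp at hq

lemma approx_numeral_right {n k : ℕ} {P : Tm} (h : Approx x M n P (numeral k)) :
    P = numeral k := by
  induction k generalizing P with
  | zero => exact approx_zero_right h
  | succ m ih =>
      rw [numeral_succ] at h ⊢
      obtain ⟨P1, rfl, h1⟩ := approx_succ_right h
      rw [ih h1]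

lemma approx_value_right {n : ℕ} {P Q : Tm} (hv : IsValue Q) (h : Approx x M n P Q) :
    IsValue P := by
  induction hv generalizing P with
  | var y => rw [approx_var_right h]; exact IsValue.var y
  | num k => rw [approx_numeral_right h]; exact IsValue.num k
  | pair hV hW ihV ihW =>
      obtain ⟨P1, P2, rfl, h1, h2⟩ := approx_pair_right h
      exact IsValue.pair (ihV h1) (ihW h2)
  | abs y B =>
      obtain ⟨P1, rfl, _⟩ := approx_abs_right h
      exact IsValue.abs y P1

lemma approx_fsem_right {F : FTy} {n : ℕ} {P V : Tm} (hF : FSem F V)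
    (h : Approx x M n P V) : P = V := by
  induction F generalizing P V with
  | nat =>
      obtain ⟨k, rfl⟩ := hF
      exact approx_numeral_right h
  | prod F1 F2 ih1 ih2 =>
      obtain ⟨V1, V2, rfl, h1, h2⟩ := hF
      obtain ⟨P1, P2, rfl, hh1, hh2⟩ := approx_pair_right h
      rw [ih1 h1 hh1, ih2 h2 hh2]

/-! ### Left (upward) inversion lemmas -/

lemma approx_succ_left {n : ℕ} {P1 Q : Tm} (h : Approx x M n (.succ P1) Q) :
    (∃ Q1, Q = .succ Q1 ∧ Approx x M n P1 Q1) ∨ Q = .fix x M := by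
  generalize hp : Tm.succ P1 = P at h
  cases h with
  | base hm => exact Or.inr rfl
  | var => simp at hp
  | zero => simp at hp
  | succ h1 => injection hp with h2; subst h2; exact Or.inl ⟨_, rfl, h1⟩
  | pred => simp at hp
  | ifz => simp at hp
  | abs => simp at hp
  | app => simp at hp
  | fixc => simp at hp
  | pair => simp at hp
  | lett => simp at hp

lemma approx_pred_left {n : ℕ} {P1 Q : Tm} (h : Approx x M n (.pred P1) Q) :
    (∃ Q1, Q = .pred Q1 ∧ Approx x M n P1 Q1) ∨ Q = .fix x M := by
  generalize hp : Tm.pred P1 = P at h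
  cases h with
  | base hm => exact Or.inr rfl
  | var => simp at hp
  | zero => simp at hp
  | succ => simp at hp
  | pred h1 => injection hp with h2; subst h2; exact Or.inl ⟨_, rfl, h1⟩
  | ifz => simp at hp
  | abs => simp at hp
  | app => simp at hp
  | fixc => simp at hp
  | pair => simp at hp
  | lett => simp at hp

lemma approx_ifz_left {n : ℕ} {P1 P2 P3 Q : Tm} (h : Approx x M n (.ifz P1 P2 P3) Q) :
    (∃ Q1 Q2 Q3, Q = .ifz Q1 Q2 Q3 ∧ Approx x M n P1 Q1 ∧ Approx x M n P2 Q2 ∧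
      Approx x M n P3 Q3) ∨ Q = .fix x M := by
  generalize hp : Tm.ifz P1 P2 P3 = P at h
  cases h with
  | base hm => exact Or.inr rfl
  | var => simp at hp
  | zero => simp at hp
  | succ => simp at hp
  | pred => simp at hp
  | ifz h1 h2 h3 => injection hp with e1 e2 e3; subst e1; subst e2; subst e3; exact Or.inl ⟨_, _, _, rfl, h1, h2, h3⟩
  | abs => simp at hp
  | app => simp at hp
  | fixc => simp at hp
  | pair => simp at hp
  | lett => simp at hp

lemma approx_abs_left {n : ℕ} {y : ℕ} {P1 Q : Tm} (h : Approx x M n (.abs y P1) Q) :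
    (∃ Q1, Q = .abs y Q1 ∧ Approx x M n P1 Q1) ∨ Q = .fix x M := by
  generalize hp : Tm.abs y P1 = P at h
  cases h with
  | base hm => exact Or.inr rfl
  | var => simp at hp
  | zero => simp at hp
  | succ => simp at hp
  | pred => simp at hp
  | ifz => simp at hp
  | abs z h1 => injection hp with e1 e2; subst e1; subst e2; exact Or.inl ⟨_, rfl, h1⟩
  | app => simp at hp
  | fixc => simp at hp
  | pair => simp at hp
  | lett => simp at hp

lemma approx_app_left {n : ℕ} {P1 P2 Q : Tm} (h : Approx x M n (.app P1 P2) Q) :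
    (∃ Q1 Q2, Q = .app Q1 Q2 ∧ Approx x M n P1 Q1 ∧ Approx x M n P2 Q2) ∨
      Q = .fix x M := by
  generalize hp : Tm.app P1 P2 = P at h
  cases h with
  | base hm => exact Or.inr rfl
  | var => simp at hp
  | zero => simp at hp
  | succ => simp at hp
  | pred => simp at hp
  | ifz => simp at hp
  | abs => simp at hp
  | app h1 h2 => injection hp with e1 e2; subst e1; subst e2; exact Or.inl ⟨_, _, rfl, h1, h2⟩
  | fixc => simp at hp
  | pair => simp at hp
  | lett => simp at hp

lemma approx_fix_left {n : ℕ} {y : ℕ} {P1 Q : Tm} (h : Approx x M n (.fix y P1) Q) :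
    (∃ Q1, Q = .fix y Q1 ∧ Approx x M n P1 Q1) ∨ Q = .fix x M := by
  generalize hp : Tm.fix y P1 = P at h
  cases h with
  | base hm => exact Or.inr rfl
  | var => simp at hp
  | zero => simp at hp
  | succ => simp at hp
  | pred => simp at hp
  | ifz => simp at hp
  | abs => simp at hp
  | app => simp at hp
  | fixc z h1 => injection hp with e1 e2; subst e1; subst e2; exact Or.inl ⟨_, rfl, h1⟩
  | pair => simp at hp
  | lett => simp at hp

lemma approx_pair_left {n : ℕ} {P1 P2 Q : Tm} (h : Approx x M n (.pair P1 P2) Q) :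
    (∃ Q1 Q2, Q = .pair Q1 Q2 ∧ Approx x M n P1 Q1 ∧ Approx x M n P2 Q2) ∨
      Q = .fix x M := by
  generalize hp : Tm.pair P1 P2 = P at h
  cases h with
  | base hm => exact Or.inr rfl
  | var => simp at hp
  | zero => simp at hp
  | succ => simp at hp
  | pred => simp at hp
  | ifz => simp at hp
  | abs => simp at hp
  | app => simp at hp
  | fixc => simp at hp
  | pair h1 h2 => injection hp with e1 e2; subst e1; subst e2; exact Or.inl ⟨_, _, rfl, h1, h2⟩
  | lett => simp at hp

lemma approx_lett_left {n : ℕ} {a b : ℕ} {P1 P2 Q : Tm}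
    (h : Approx x M n (.lett a b P1 P2) Q) :
    (∃ Q1 Q2, Q = .lett a b Q1 Q2 ∧ Approx x M n P1 Q1 ∧ Approx x M n P2 Q2) ∨
      Q = .fix x M := by
  generalize hp : Tm.lett a b P1 P2 = P at h
  cases h with
  | base hm => exact Or.inr rfl
  | var => simp at hp
  | zero => simp at hp
  | succ => simp at hp
  | pred => simp at hp
  | ifz => simp at hp
  | abs => simp at hp
  | app => simp at hp
  | fixc => simp at hp
  | pair => simp at hp
  | lett c d h1 h2 => injection hp with e1 e2 e3 e4; subst e1; subst e2; subst e3; subst e4; exact Or.inl ⟨_, _, rfl, h1, h2⟩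

lemma approx_var_left {n : ℕ} {z : ℕ} {Q : Tm} (h : Approx x M n (.var z) Q) :
    Q = .var z ∨ Q = .fix x M := by
  generalize hp : Tm.var z = P at h
  cases h with
  | base hm => exact Or.inr rfl
  | var y => injection hp with e1; subst e1; exact Or.inl rfl
  | zero => simp at hp
  | succ => simp at hp
  | pred => simp at hp
  | ifz => simp at hp
  | abs => simp at hp
  | app => simp at hp
  | fixc => simp at hp
  | pair => simp at hp
  | lett => simp at hp

lemma approx_zero_left {n : ℕ} {Q : Tm} (h : Approx x M n .zero Q) :
    Q = .zero ∨ Q = .fix x M := by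
  generalize hp : Tm.zero = P at h
  cases h with
  | base hm => exact Or.inr rfl
  | var => simp at hp
  | zero => exact Or.inl rfl
  | succ => simp at hp
  | pred => simp at hp
  | ifz => simp at hp
  | abs => simp at hp
  | app => simp at hp
  | fixc => simp at hp
  | pair => simp at hp
  | lett => simp at hp

lemma approx_numeral_left {n k : ℕ} {Q : Tm} (h : Approx x M n (numeral k) Q) :
    Q = numeral k ∨ ∃ Q', Step Q Q' := by
  induction k generalizing Q with
  | zero =>
      rcases approx_zero_left h with rfl | rfl
      · exact Or.inl rfl
      · exact Or.inr ⟨_, Step.fix_step⟩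
  | succ m ih =>
      rw [numeral_succ] at h
      rcases approx_succ_left h with ⟨Q1, rfl, h1⟩ | rfl
      · rcases ih h1 with rfl | ⟨Q', hQ'⟩
        · exact Or.inl rfl
        · exact Or.inr ⟨_, Step.succ_ctx hQ'⟩
      · exact Or.inr ⟨_, Step.fix_step⟩

lemma approx_value_left {n : ℕ} {P Q : Tm} (h : Approx x M n P Q) (hv : IsValue P) :
    IsValue Q ∨ ∃ Q', Step Q Q' := by
  induction hv generalizing Q with
  | var y =>
      rcases approx_var_left h with rfl | rfl
      · exact Or.inl (IsValue.var y)
      · exact Or.inr ⟨_, Step.fix_step⟩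
  | num k =>
      rcases approx_numeral_left h with rfl | hs
      · exact Or.inl (IsValue.num k)
      · exact Or.inr hs
  | @pair V W hV hW ihV ihW =>
      rcases approx_pair_left h with ⟨Q1, Q2, rfl, h1, h2⟩ | rfl
      · rcases ihV h1 with hQ1 | ⟨Q', hQ'⟩
        · rcases ihW h2 with hQ2 | ⟨Q', hQ'⟩
          · exact Or.inl (IsValue.pair hQ1 hQ2)
          · exact Or.inr ⟨_, Step.pair_right hQ1 hQ'⟩
        · exact Or.inr ⟨_, Step.pair_left hQ'⟩
      · exact Or.inr ⟨_, Step.fix_step⟩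
  | abs y B =>
      rcases approx_abs_left h with ⟨Q1, rfl, _⟩ | rfl
      · exact Or.inl (IsValue.abs y Q1)
      · exact Or.inr ⟨_, Step.fix_step⟩

lemma approx_pred_right {n : ℕ} {P Q1 : Tm} (h : Approx x M n P (.pred Q1)) :
    ∃ P1, P = .pred P1 ∧ Approx x M n P1 Q1 := by
  generalize hq : Tm.pred Q1 = Q at h
  cases h with
  | base => simp at hq
  | var => simp at hq
  | zero => simp at hq
  | succ => simp at hq
  | pred h1 => injection hq with h2; subst h2; exact ⟨_, rfl, h1⟩
  | ifz => simp at hq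
  | abs => simp at hq
  | app => simp at hq
  | fixc => simp at hq
  | pair => simp at hq
  | lett => simp at hq

lemma approx_ifz_right {n : ℕ} {P Q1 Q2 Q3 : Tm} (h : Approx x M n P (.ifz Q1 Q2 Q3)) :
    ∃ P1 P2 P3, P = .ifz P1 P2 P3 ∧ Approx x M n P1 Q1 ∧ Approx x M n P2 Q2 ∧
      Approx x M n P3 Q3 := by
  generalize hq : Tm.ifz Q1 Q2 Q3 = Q at h
  cases h with
  | base => simp at hq
  | var => simp at hq
  | zero => simp at hq
  | succ => simp at hq
  | pred => simp at hq
  | ifz h1 h2 h3 => injection hq with e1 e2 e3; subst e1; subst e2; subst e3; exact ⟨_, _, _, rfl, h1, h2, h3⟩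
  | abs => simp at hq
  | app => simp at hq
  | fixc => simp at hq
  | pair => simp at hq
  | lett => simp at hq

lemma approx_app_right {n : ℕ} {P Q1 Q2 : Tm} (h : Approx x M n P (.app Q1 Q2)) :
    ∃ P1 P2, P = .app P1 P2 ∧ Approx x M n P1 Q1 ∧ Approx x M n P2 Q2 := by
  generalize hq : Tm.app Q1 Q2 = Q at h
  cases h with
  | base => simp at hq
  | var => simp at hq
  | zero => simp at hq
  | succ => simp at hq
  | pred => simp at hq
  | ifz => simp at hq
  | abs => simp at hq
  | app h1 h2 => injection hq with e1 e2; subst e1; subst e2; exact ⟨_, _, rfl, h1, h2⟩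
  | fixc => simp at hq
  | pair => simp at hq
  | lett => simp at hq

lemma approx_lett_right {n : ℕ} {a b : ℕ} {P Q1 Q2 : Tm}
    (h : Approx x M n P (.lett a b Q1 Q2)) :
    ∃ P1 P2, P = .lett a b P1 P2 ∧ Approx x M n P1 Q1 ∧ Approx x M n P2 Q2 := by
  generalize hq : Tm.lett a b Q1 Q2 = Q at h
  cases h with
  | base => simp at hq
  | var => simp at hq
  | zero => simp at hq
  | succ => simp at hq
  | pred => simp at hq
  | ifz => simp at hq
  | abs => simp at hq
  | app => simp at hq
  | fixc => simp at hq
  | pair => simp at hq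
  | lett c d h1 h2 => injection hq with e1 e2 e3 e4; subst e1; subst e2; subst e3; subst e4; exact ⟨_, _, rfl, h1, h2⟩

lemma approx_fix_right {n : ℕ} {y : ℕ} {P B : Tm} (h : Approx x M n P (.fix y B)) :
    (y = x ∧ B = M ∧ ∃ m, n ≤ m ∧ P = fixApprox x M m) ∨
      (∃ P1, P = .fix y P1 ∧ Approx x M n P1 B) := by
  generalize hq : Tm.fix y B = Q at h
  cases h with
  | base hm => injection hq with e1 e2; exact Or.inl ⟨e1, e2, _, ‹_›, rfl⟩
  | var => simp at hq
  | zero => simp at hq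
  | succ => simp at hq
  | pred => simp at hq
  | ifz => simp at hq
  | abs => simp at hq
  | app => simp at hq
  | fixc z h1 => injection hq with e1 e2; subst e1; subst e2; exact Or.inr ⟨_, rfl, h1⟩
  | pair => simp at hq
  | lett => simp at hq


lemma not_isValue_fix {y : ℕ} {B : Tm} : ¬ IsValue (.fix y B) := by
  intro h
  generalize hV : Tm.fix y B = U at h
  cases h with
  | var _ => simp at hV
  | num n => exact numeral_ne_fix n y B hV.symm
  | pair _ _ => simp at hV
  | abs _ _ => simp at hV

section Sim

variable {x : ℕ} {M : Tm}

/-- Downward one-step simulation: a step of the fixpoint side is matched by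
zero or more steps of the approximant side, losing one index. -/
lemma approx_step (hM : ClosedTm (.fix x M)) {n : ℕ} {P Q Q' : Tm}
    (hap : Approx x M (n+1) P Q) (hs : Step Q Q') :
    ∃ P', Steps P P' ∧ Approx x M n P' Q' := by
  induction hs generalizing P n with
  | @ifz_zero N P2 =>
      obtain ⟨P1, N1, P21, rfl, h1, h2, h3⟩ := approx_ifz_right hap
      rw [approx_numeral_right h1]
      exact ⟨N1, Relation.ReflTransGen.single Step.ifz_zero, approx_mono (Nat.le_succ n) h2⟩
  | @ifz_succ k N P2 =>
      obtain ⟨P1, N1, P21, rfl, h1, h2, h3⟩ := approx_ifz_right hap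
      rw [approx_numeral_right h1]
      exact ⟨P21, Relation.ReflTransGen.single Step.ifz_succ, approx_mono (Nat.le_succ n) h3⟩
  | @lett_beta a b V W B hV hW =>
      obtain ⟨S, B1, rfl, hS, hB⟩ := approx_lett_right hap
      obtain ⟨V1, W1, rfl, h1, h2⟩ := approx_pair_right hS
      refine ⟨subst b W1 (subst a V1 B1),
        Relation.ReflTransGen.single
          (Step.lett_beta (approx_value_right hV h1) (approx_value_right hW h2)), ?_⟩
      exact approx_subst hM b (approx_mono (Nat.le_succ n) h2)
        (approx_subst hM a (approx_mono (Nat.le_succ n) h1) (approx_mono (Nat.le_succ n) hB))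
  | @fix_step y B =>
      rcases approx_fix_right hap with ⟨hxy, hBM, m, hm, rfl⟩ | ⟨P1, rfl, h1⟩
      · obtain ⟨m', rfl⟩ : ∃ m', m = m' + 1 := by
          cases m with
          | zero => exact absurd hm (by omega)
          | succ m' => exact ⟨m', rfl⟩
        rw [hxy, hBM]
        refine ⟨fixApprox x M (m' + 1), Relation.ReflTransGen.refl, ?_⟩
        show Approx x M n (subst x (fixApprox x M m') M) (subst x (.fix x M) M)
        exact approx_subst hM x (Approx.base (m := m') (by omega)) (approx_refl n M)
      · refine ⟨subst y (.fix y P1) P1, Relation.ReflTransGen.single Step.fix_step, ?_⟩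
        exact approx_subst hM y (Approx.fixc y (approx_mono (Nat.le_succ n) h1))
          (approx_mono (Nat.le_succ n) h1)
  | pred_zero =>
      obtain ⟨P1, rfl, h1⟩ := approx_pred_right hap
      rw [approx_numeral_right h1]
      exact ⟨numeral 0, Relation.ReflTransGen.single Step.pred_zero, approx_refl n _⟩
  | @pred_succ k =>
      obtain ⟨P1, rfl, h1⟩ := approx_pred_right hap
      rw [approx_numeral_right h1]
      exact ⟨numeral k, Relation.ReflTransGen.single Step.pred_succ, approx_refl n _⟩
  | @beta a B V hV =>
      obtain ⟨S, P2, rfl, hS, h2⟩ := approx_app_right hap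
      obtain ⟨B1, rfl, hB⟩ := approx_abs_right hS
      refine ⟨subst a P2 B1,
        Relation.ReflTransGen.single (Step.beta (approx_value_right hV h2)), ?_⟩
      exact approx_subst hM a (approx_mono (Nat.le_succ n) h2) (approx_mono (Nat.le_succ n) hB)
  | succ_ctx hQ ih =>
      obtain ⟨P1, rfl, h1⟩ := approx_succ_right hap
      obtain ⟨P1', hs1, ha1⟩ := ih h1
      exact ⟨.succ P1', steps_succ hs1, Approx.succ ha1⟩
  | pred_ctx hQ ih =>
      obtain ⟨P1, rfl, h1⟩ := approx_pred_right hap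
      obtain ⟨P1', hs1, ha1⟩ := ih h1
      exact ⟨.pred P1', steps_pred hs1, Approx.pred ha1⟩
  | pair_left hQ ih =>
      obtain ⟨P1, P2, rfl, h1, h2⟩ := approx_pair_right hap
      obtain ⟨P1', hs1, ha1⟩ := ih h1
      exact ⟨.pair P1' P2, steps_pair_left hs1,
        Approx.pair ha1 (approx_mono (Nat.le_succ n) h2)⟩
  | pair_right hV hQ ih =>
      obtain ⟨P1, P2, rfl, h1, h2⟩ := approx_pair_right hap
      obtain ⟨P2', hs2, ha2⟩ := ih h2
      exact ⟨.pair P1 P2', steps_pair_right (approx_value_right hV h1) hs2,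
        Approx.pair (approx_mono (Nat.le_succ n) h1) ha2⟩
  | lett_ctx hQ ih =>
      obtain ⟨P1, P2, rfl, h1, h2⟩ := approx_lett_right hap
      obtain ⟨P1', hs1, ha1⟩ := ih h1
      exact ⟨.lett _ _ P1' P2, steps_lett hs1,
        Approx.lett _ _ ha1 (approx_mono (Nat.le_succ n) h2)⟩
  | ifz_ctx hQ ih =>
      obtain ⟨P1, P2, P3, rfl, h1, h2, h3⟩ := approx_ifz_right hap
      obtain ⟨P1', hs1, ha1⟩ := ih h1
      exact ⟨.ifz P1' P2 P3, steps_ifz hs1,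
        Approx.ifz ha1 (approx_mono (Nat.le_succ n) h2) (approx_mono (Nat.le_succ n) h3)⟩
  | app_right hQ ih =>
      obtain ⟨S, P2, rfl, hS, h2⟩ := approx_app_right hap
      obtain ⟨B1, rfl, hB⟩ := approx_abs_right hS
      obtain ⟨P2', hs2, ha2⟩ := ih h2
      exact ⟨.app (.abs _ B1) P2', steps_app_right hs2,
        Approx.app (Approx.abs _ (approx_mono (Nat.le_succ n) hB)) ha2⟩
  | app_left hQ ih =>
      obtain ⟨P1, P2, rfl, h1, h2⟩ := approx_app_right hap
      obtain ⟨P1', hs1, ha1⟩ := ih h1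
      exact ⟨.app P1' P2, steps_app_left hs1,
        Approx.app ha1 (approx_mono (Nat.le_succ n) h2)⟩

/-- Downward many-step simulation. -/
lemma approx_steps (hM : ClosedTm (.fix x M)) {Q Q' : Tm} (h : Steps Q Q') :
    ∃ k, ∀ n P, Approx x M (n + k) P Q → ∃ P', Steps P P' ∧ Approx x M n P' Q' := by
  induction h with
  | refl => exact ⟨0, fun n P hp => ⟨P, Relation.ReflTransGen.refl, hp⟩⟩
  | tail hQR hstep ih =>
      obtain ⟨k, hk⟩ := ih
      refine ⟨k + 1, fun n P hp => ?_⟩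
      obtain ⟨P1, hs1, ha1⟩ := hk (n+1) P (approx_mono (by omega) hp)
      obtain ⟨P2, hs2, ha2⟩ := approx_step hM ha1 hstep
      exact ⟨P2, hs1.trans hs2, ha2⟩

/-- Upward progress: if the approximant side can step, so can the fixpoint side. -/
lemma approx_progress {n : ℕ} {P Q P' : Tm} (hap : Approx x M n P Q)
    (hs : Step P P') : ∃ Q', Step Q Q' := by
  induction hs generalizing Q n with
  | ifz_zero =>
      rcases approx_ifz_left hap with ⟨Q1, Q2, Q3, rfl, h1, h2, h3⟩ | rfl
      · rcases approx_numeral_left h1 with rfl | ⟨Q', hQ'⟩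
        · exact ⟨_, Step.ifz_zero⟩
        · exact ⟨_, Step.ifz_ctx hQ'⟩
      · exact ⟨_, Step.fix_step⟩
  | ifz_succ =>
      rcases approx_ifz_left hap with ⟨Q1, Q2, Q3, rfl, h1, h2, h3⟩ | rfl
      · rcases approx_numeral_left h1 with rfl | ⟨Q', hQ'⟩
        · exact ⟨_, Step.ifz_succ⟩
        · exact ⟨_, Step.ifz_ctx hQ'⟩
      · exact ⟨_, Step.fix_step⟩
  | lett_beta hV hW =>
      rcases approx_lett_left hap with ⟨S, B, rfl, hS, hB⟩ | rfl
      · rcases approx_pair_left hS with ⟨Q1, Q2, rfl, h1, h2⟩ | rfl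
        · rcases approx_value_left h1 hV with hv1 | ⟨Q', hQ'⟩
          · rcases approx_value_left h2 hW with hv2 | ⟨Q', hQ'⟩
            · exact ⟨_, Step.lett_beta hv1 hv2⟩
            · exact ⟨_, Step.lett_ctx (Step.pair_right hv1 hQ')⟩
          · exact ⟨_, Step.lett_ctx (Step.pair_left hQ')⟩
        · exact ⟨_, Step.lett_ctx Step.fix_step⟩
      · exact ⟨_, Step.fix_step⟩
  | fix_step =>
      rcases approx_fix_left hap with ⟨Q1, rfl, _⟩ | rfl
      · exact ⟨_, Step.fix_step⟩
      · exact ⟨_, Step.fix_step⟩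
  | pred_zero =>
      rcases approx_pred_left hap with ⟨Q1, rfl, h1⟩ | rfl
      · rcases approx_numeral_left h1 with rfl | ⟨Q', hQ'⟩
        · exact ⟨_, Step.pred_zero⟩
        · exact ⟨_, Step.pred_ctx hQ'⟩
      · exact ⟨_, Step.fix_step⟩
  | pred_succ =>
      rcases approx_pred_left hap with ⟨Q1, rfl, h1⟩ | rfl
      · rcases approx_numeral_left h1 with rfl | ⟨Q', hQ'⟩
        · exact ⟨_, Step.pred_succ⟩
        · exact ⟨_, Step.pred_ctx hQ'⟩
      · exact ⟨_, Step.fix_step⟩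
  | beta hV =>
      rcases approx_app_left hap with ⟨Q1, Q2, rfl, h1, h2⟩ | rfl
      · rcases approx_abs_left h1 with ⟨B1, rfl, _⟩ | rfl
        · rcases approx_value_left h2 hV with hv2 | ⟨Q', hQ'⟩
          · exact ⟨_, Step.beta hv2⟩
          · exact ⟨_, Step.app_right hQ'⟩
        · exact ⟨_, Step.app_left Step.fix_step⟩
      · exact ⟨_, Step.fix_step⟩
  | succ_ctx h ih =>
      rcases approx_succ_left hap with ⟨Q1, rfl, h1⟩ | rfl
      · obtain ⟨Q', hQ'⟩ := ih h1
        exact ⟨_, Step.succ_ctx hQ'⟩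
      · exact ⟨_, Step.fix_step⟩
  | pred_ctx h ih =>
      rcases approx_pred_left hap with ⟨Q1, rfl, h1⟩ | rfl
      · obtain ⟨Q', hQ'⟩ := ih h1
        exact ⟨_, Step.pred_ctx hQ'⟩
      · exact ⟨_, Step.fix_step⟩
  | pair_left h ih =>
      rcases approx_pair_left hap with ⟨Q1, Q2, rfl, h1, h2⟩ | rfl
      · obtain ⟨Q', hQ'⟩ := ih h1
        exact ⟨_, Step.pair_left hQ'⟩
      · exact ⟨_, Step.fix_step⟩
  | pair_right hV h ih =>
      rcases approx_pair_left hap with ⟨Q1, Q2, rfl, h1, h2⟩ | rfl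
      · rcases approx_value_left h1 hV with hv1 | ⟨Q', hQ'⟩
        · obtain ⟨Q', hQ'⟩ := ih h2
          exact ⟨_, Step.pair_right hv1 hQ'⟩
        · exact ⟨_, Step.pair_left hQ'⟩
      · exact ⟨_, Step.fix_step⟩
  | lett_ctx h ih =>
      rcases approx_lett_left hap with ⟨Q1, Q2, rfl, h1, h2⟩ | rfl
      · obtain ⟨Q', hQ'⟩ := ih h1
        exact ⟨_, Step.lett_ctx hQ'⟩
      · exact ⟨_, Step.fix_step⟩
  | ifz_ctx h ih =>
      rcases approx_ifz_left hap with ⟨Q1, Q2, Q3, rfl, h1, h2, h3⟩ | rfl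
      · obtain ⟨Q', hQ'⟩ := ih h1
        exact ⟨_, Step.ifz_ctx hQ'⟩
      · exact ⟨_, Step.fix_step⟩
  | app_right h ih =>
      rcases approx_app_left hap with ⟨Q1, Q2, rfl, h1, h2⟩ | rfl
      · rcases approx_abs_left h1 with ⟨B1, rfl, _⟩ | rfl
        · obtain ⟨Q', hQ'⟩ := ih h2
          exact ⟨_, Step.app_right hQ'⟩
        · exact ⟨_, Step.app_left Step.fix_step⟩
      · exact ⟨_, Step.fix_step⟩
  | app_left h ih =>
      rcases approx_app_left hap with ⟨Q1, Q2, rfl, h1, h2⟩ | rfl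
      · obtain ⟨Q', hQ'⟩ := ih h1
        exact ⟨_, Step.app_left hQ'⟩
      · exact ⟨_, Step.fix_step⟩

lemma approx_normal {n : ℕ} {P Q : Tm} (hap : Approx x M n P Q)
    (hQ : NormalForm Q) : NormalForm P :=
  fun ⟨P', hP'⟩ => hQ (approx_progress hap hP')

end Sim

end Approx


section Main

variable {x : ℕ} {M : Tm}

lemma closed_subst_of_closed_abs {y : ℕ} {B W : Tm}
    (hB : ClosedTm (.abs y B)) (hW : ClosedTm W) : ClosedTm (subst y W B) := by
  simp only [ClosedTm, fv] at hB hW ⊢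
  apply Finset.subset_empty.1
  refine (fv_subst_subset y W B).trans ?_
  rw [hW, hB]
  simp

/-- Positive transfer for finitely verifiable types. -/
lemma pos_transfer (hM : ClosedTm (.fix x M)) (F : FTy) {N : Tm}
    (hN : TSem (FSem F) N) :
    ∃ k, ∀ P, ClosedTm P → Approx x M k P N → TSem (FSem F) P := by
  obtain ⟨hNc, V, hsteps, hVval, hVF⟩ := hN
  obtain ⟨k, hk⟩ := approx_steps hM hsteps
  refine ⟨k, fun P hPc hap => ?_⟩
  obtain ⟨P', hs, ha⟩ := hk 0 P (by simpa using hap)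
  obtain rfl := approx_fsem_right hVF ha
  exact ⟨hPc, P', hs, hVval, hVF⟩

/-- Generic negative transfer: from a value-level refutation transfer we get a
term-level one. -/
lemma neg_gen (hM : ClosedTm (.fix x M)) (A : Ty)
    (hval : ∀ R, IsValue R → ClosedTm R → ¬ Sem A R →
      ∃ j, ∀ P, Approx x M j P R → ¬ Sem A P)
    {N : Tm} (hNc : ClosedTm N) (hN : ¬ TBarSem (Sem A) N) :
    ∃ k, ∀ P, Approx x M k P N → ¬ TBarSem (Sem A) P := by
  have hnotT : ¬ TSem (Sem A) N := fun h => hN (Or.inl h)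
  have hnotD : ¬ Diverges N := fun h => hN (Or.inr ⟨hNc, h⟩)
  obtain ⟨R, hNR, hRnf⟩ := not_not.mp hnotD
  obtain ⟨k_s, hk_s⟩ := approx_steps hM hNR
  by_cases hRv : IsValue R
  · have hRc : ClosedTm R := steps_closed hNR hNc
    have hRsem : ¬ Sem A R := fun hs => hnotT ⟨hNc, R, hNR, hRv, hs⟩
    obtain ⟨j, hj⟩ := hval R hRv hRc hRsem
    refine ⟨j + k_s, fun P hap => ?_⟩
    obtain ⟨P', hPP', haP'⟩ := hk_s j P hap
    have hP'nf : NormalForm P' := approx_normal haP' hRnf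
    rintro (⟨hPc, V, hPV, hVval, hVsem⟩ | ⟨hPc, hdiv⟩)
    · obtain rfl := nf_unique hPV (value_normal hVval) hP'nf hPP'
      exact hj _ haP' hVsem
    · exact hdiv ⟨P', hPP', hP'nf⟩
  · refine ⟨k_s, fun P hap => ?_⟩
    obtain ⟨P', hPP', haP'⟩ := hk_s 0 P (by simpa using hap)
    have hP'nf : NormalForm P' := approx_normal haP' hRnf
    rintro (⟨hPc, V, hPV, hVval, hVsem⟩ | ⟨hPc, hdiv⟩)
    · obtain rfl := nf_unique hPV (value_normal hVval) hP'nf hPP'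
      rcases approx_value_left haP' hVval with hRval | ⟨R', hR'⟩
      · exact hRv hRval
      · exact hRnf ⟨R', hR'⟩
    · exact hdiv ⟨P', hPP', hP'nf⟩

/-- Value-level negative transfer, by induction on the type. -/
lemma neg_val (hM : ClosedTm (.fix x M)) (A : Ty) :
    ∀ R, IsValue R → ClosedTm R → ¬ Sem A R →
      ∃ j, ∀ P, Approx x M j P R → ¬ Sem A P := by
  induction A with
  | nat =>
      intro R hRv hRc hRs
      refine ⟨0, fun P hap hsem => ?_⟩
      obtain ⟨k, rfl⟩ := hsem
      rcases approx_numeral_left hap with rfl | ⟨R', hR'⟩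
      · exact hRs ⟨k, rfl⟩
      · exact value_no_step hRv _ hR'
  | prod B C ihB ihC =>
      intro R hRv hRc hRs
      by_cases hshape : ∃ R1 R2, R = Tm.pair R1 R2
      · obtain ⟨R1, R2, rfl⟩ := hshape
        obtain ⟨hv1, hv2⟩ := isValue_pair hRv
        have hc12 : ClosedTm R1 ∧ ClosedTm R2 := by
          simp only [ClosedTm, fv, Finset.union_eq_empty] at hRc
          exact hRc
        by_cases hB : Sem B R1
        · have hC : ¬ Sem C R2 := fun hC => hRs ⟨R1, R2, rfl, hB, hC⟩
          obtain ⟨j, hj⟩ := ihC R2 hv2 hc12.2 hC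
          refine ⟨j, fun P hap hsem => ?_⟩
          obtain ⟨V, W, rfl, hV, hW⟩ := hsem
          rcases approx_pair_left hap with ⟨Q1, Q2, hQ, h1, h2⟩ | hfix
          · injection hQ with e1 e2
            subst e1; subst e2
            exact hj W h2 hW
          · exact not_isValue_fix (hfix ▸ hRv)
        · obtain ⟨j, hj⟩ := ihB R1 hv1 hc12.1 hB
          refine ⟨j, fun P hap hsem => ?_⟩
          obtain ⟨V, W, rfl, hV, hW⟩ := hsem
          rcases approx_pair_left hap with ⟨Q1, Q2, hQ, h1, h2⟩ | hfix
          · injection hQ with e1 e2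
            subst e1; subst e2
            exact hj V h1 hV
          · exact not_isValue_fix (hfix ▸ hRv)
      · refine ⟨0, fun P hap hsem => ?_⟩
        obtain ⟨V, W, rfl, hV, hW⟩ := hsem
        rcases approx_pair_left hap with ⟨Q1, Q2, hQ, h1, h2⟩ | hfix
        · exact hshape ⟨Q1, Q2, hQ⟩
        · exact not_isValue_fix (hfix ▸ hRv)
  | arrow B C ihB ihC =>
      intro R hRv hRc hRs
      by_cases hshape : ∃ y B0, R = Tm.abs y B0
      · obtain ⟨y, B0, rfl⟩ := hshape
        have hW : ∃ W, ClosedTm W ∧ IsValue W ∧ Sem B W ∧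
            ¬ TBarSem (Sem C) (subst y W B0) := by
          by_contra hcon
          push_neg at hcon
          exact hRs ⟨y, B0, rfl, hRc, fun V hVc hVv hVs => hcon V hVc hVv hVs⟩
        obtain ⟨W, hWc, hWv, hWs, hWbad⟩ := hW
        have hsubc : ClosedTm (subst y W B0) := closed_subst_of_closed_abs hRc hWc
        obtain ⟨k, hk⟩ := neg_gen hM C (ihC) hsubc hWbad
        refine ⟨k, fun P hap hsem => ?_⟩
        obtain ⟨y', B1, rfl, hPc, hPfun⟩ := hsem
        rcases approx_abs_left hap with ⟨Q1, hQ, h1⟩ | hfix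
        · injection hQ with e1 e2
          subst e1; subst e2
          exact hk _ (approx_subst hM y (approx_refl k W) h1) (hPfun W hWc hWv hWs)
        · exact not_isValue_fix (hfix ▸ hRv)
      · refine ⟨0, fun P hap hsem => ?_⟩
        obtain ⟨y', B1, rfl, hPc, hPfun⟩ := hsem
        rcases approx_abs_left hap with ⟨Q1, hQ, h1⟩ | hfix
        · exact hshape ⟨y', Q1, hQ⟩
        · exact not_isValue_fix (hfix ▸ hRv)
  | narrow B F ihB =>
      intro R hRv hRc hRs
      by_cases hshape : ∃ y B0, R = Tm.abs y B0
      · obtain ⟨y, B0, rfl⟩ := hshape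
        have hW : ∃ W, ClosedTm W ∧ IsValue W ∧ TSem (FSem F) (subst y W B0) ∧
            ¬ Sem B W := by
          by_contra hcon
          push_neg at hcon
          exact hRs ⟨y, B0, rfl, hRc, fun V hVc hVv hVt => hcon V hVc hVv hVt⟩
        obtain ⟨W, hWc, hWv, hWt, hWbad⟩ := hW
        obtain ⟨k, hk⟩ := pos_transfer hM F hWt
        refine ⟨k, fun P hap hsem => ?_⟩
        obtain ⟨y', B1, rfl, hPc, hPfun⟩ := hsem
        rcases approx_abs_left hap with ⟨Q1, hQ, h1⟩ | hfix
        · injection hQ with e1 e2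
          subst e1; subst e2
          have hsub : TSem (FSem F) (subst y W B1) :=
            hk _ (closed_subst_of_closed_abs hPc hWc)
              (approx_subst hM y (approx_refl k W) h1)
          exact hWbad (hPfun W hWc hWv hsub)
        · exact not_isValue_fix (hfix ▸ hRv)
      · refine ⟨0, fun P hap hsem => ?_⟩
        obtain ⟨y', B1, rfl, hPc, hPfun⟩ := hsem
        rcases approx_abs_left hap with ⟨Q1, hQ, h1⟩ | hfix
        · exact hshape ⟨y', Q1, hQ⟩
        · exact not_isValue_fix (hfix ▸ hRv)
  | ok =>
      intro R hRv hRc hRs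
      exact absurd ⟨hRc, hRv⟩ hRs

end Main

lemma closed_subst_approx {D : Tm} {z : ℕ} (hfix : ClosedTm (.fix x M))
    (hcl : ClosedTm (subst z (.fix x M) D)) (n : ℕ) :
    ClosedTm (subst z (fixApprox x M n) D) := by
  simp only [ClosedTm] at hcl ⊢
  have h1 : fv D \ {z} = ∅ :=
    Finset.subset_empty.1 (hcl ▸ fv_subset_fv_subst z (.fix x M) D)
  have h2 : fv (fixApprox x M n) = ∅ := closed_fixApprox hfix n
  apply Finset.subset_empty.1
  refine (fv_subst_subset z (fixApprox x M n) D).trans ?_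
  rw [h1, h2]
  simp

/-- Types furnish finite counterexamples for fixpoints. -/
theorem finite_counterexamples (D : Tm) (z : ℕ) (x : ℕ) (M : Tm)
    (hfix : ClosedTm (.fix x M)) (hcl : ClosedTm (subst z (.fix x M) D)) :
    (∀ A : Ty, ¬ TBarSem (Sem A) (subst z (.fix x M) D) →
      ∃ n₀ : ℕ, ∀ n ≥ n₀, ¬ TBarSem (Sem A) (subst z (fixApprox x M n) D)) ∧
    (∀ F : FTy, TSem (FSem F) (subst z (.fix x M) D) →
      ∃ n₀ : ℕ, ∀ n ≥ n₀, TSem (FSem F) (subst z (fixApprox x M n) D)) := by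
  constructor
  · intro A hA
    obtain ⟨k, hk⟩ := neg_gen hfix A (neg_val hfix A) hcl hA
    exact ⟨k, fun n hn =>
      hk _ (approx_subst hfix z (Approx.base hn) (approx_refl k D))⟩
  · intro F hF
    obtain ⟨k, hk⟩ := pos_transfer hfix F hF
    exact ⟨k, fun n hn => hk _ (closed_subst_approx hfix hcl n)
      (approx_subst hfix z (Approx.base hn) (approx_refl k D))⟩

end PCF
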